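/- In the setting of the previous statement with M₀ = B₁⊗I + I⊗B₂ negative definite and M₁ = A₁⊗I + I⊗A₂, suppose (λ, v) satisfies (a₁(u)I + A₂)v = −λ(b₁(u)I + B₂)v for a unit vector u, where a₁(u) = uᵀA₁u, b₁(u) = uᵀB₁u, and v is a unit vector. Then λ = 𝔯(u⊗v) and the gradient ∇𝔯(u⊗v) is orthogonal to the subspace {u⊗y : y ∈ ℝᵐ}; consequently ∇𝔯(u⊗v) lies in {x⊗v : x ∈ ℝⁿ}. -/

import Mathlib

open Matrix Kronecker

section AuxGradient
open InnerProductSpace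

private lemma dot_kron' {ι₁ ι₂ : Type*} [Fintype ι₁] [Fintype ι₂]
    (a c : ι₁ → ℝ) (b d : ι₂ → ℝ) :
    (fun p : ι₁ × ι₂ => a p.1 * b p.2) ⬝ᵥ (fun p => c p.1 * d p.2)
      = (a ⬝ᵥ c) * (b ⬝ᵥ d) := by
  simp only [dotProduct, Fintype.sum_prod_type, Finset.sum_mul_sum]
  apply Finset.sum_congr rfl; intro i _
  apply Finset.sum_congr rfl; intro j _
  ring

private lemma kron_mulVec' {ι₁ ι₂ : Type*} [Fintype ι₁] [Fintype ι₂]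
    (A : Matrix ι₁ ι₁ ℝ) (C : Matrix ι₂ ι₂ ℝ) (a : ι₁ → ℝ) (b : ι₂ → ℝ) :
    (A ⊗ₖ C).mulVec (fun p => a p.1 * b p.2)
      = fun p => (A.mulVec a) p.1 * (C.mulVec b) p.2 := by
  funext p
  simp only [mulVec, dotProduct, Fintype.sum_prod_type, kroneckerMap_apply,
    Finset.sum_mul_sum]
  apply Finset.sum_congr rfl; intro i _
  apply Finset.sum_congr rfl; intro j _
  ring

private lemma quad_hasFDerivAt' {ι : Type*} [Fintype ι] [DecidableEq ι]
    (M : Matrix ι ι ℝ) (hM : M.IsSymm) (w : EuclideanSpace ℝ ι) :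
    HasFDerivAt (fun X : EuclideanSpace ℝ ι => (fun p => X p) ⬝ᵥ M.mulVec (fun p => X p))
      (toDual ℝ (EuclideanSpace ℝ ι)
        (WithLp.toLp 2 (fun p => 2 * M.mulVec (fun q => w q) p) : EuclideanSpace ℝ ι)) w := by
  have hp : ∀ p : ι, HasFDerivAt (fun X : EuclideanSpace ℝ ι => X p)
      (EuclideanSpace.proj p : EuclideanSpace ℝ ι →L[ℝ] ℝ) w := by
    intro p
    have : (fun X : EuclideanSpace ℝ ι => X p) = ⇑(EuclideanSpace.proj (𝕜 := ℝ) p) := by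
      funext X; simp
    rw [this]
    exact (EuclideanSpace.proj (𝕜 := ℝ) p).hasFDerivAt
  have h1 : HasFDerivAt (fun X : EuclideanSpace ℝ ι => ∑ p, ∑ q, M p q * (X p * X q))
      (∑ p, ∑ q, M p q • ((w p) • (EuclideanSpace.proj q : EuclideanSpace ℝ ι →L[ℝ] ℝ)
        + (w q) • (EuclideanSpace.proj p : EuclideanSpace ℝ ι →L[ℝ] ℝ))) w := by
    apply HasFDerivAt.fun_sum; intro p _
    apply HasFDerivAt.fun_sum; intro q _
    exact ((hp p).mul (hp q)).const_mul (M p q)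
  have key : (fun X : EuclideanSpace ℝ ι => (fun p => X p) ⬝ᵥ M.mulVec (fun p => X p))
      = fun X : EuclideanSpace ℝ ι => ∑ p, ∑ q, M p q * (X p * X q) := by
    funext X
    simp only [dotProduct, mulVec, Finset.mul_sum]
    apply Finset.sum_congr rfl; intro i _
    apply Finset.sum_congr rfl; intro j _
    ring
  rw [key]
  refine h1.congr_fderiv (Eq.symm ?_)
  refine ContinuousLinearMap.ext fun (y : EuclideanSpace ℝ ι) => ?_
  simp only [ContinuousLinearMap.sum_apply, ContinuousLinearMap.add_apply,
    ContinuousLinearMap.smul_apply, PiLp.proj_apply, smul_eq_mul,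
    toDual_apply_apply, PiLp.toLp_apply, PiLp.inner_apply, RCLike.inner_apply, conj_trivial]
  have : ∀ p q : ι, M p q * (w p * y q + w q * y p)
      = M p q * w p * y q + M p q * w q * y p := by intro p q; ring
  simp only [this, Finset.sum_add_distrib]
  rw [Finset.sum_comm (f := fun p q => M p q * w p * y q)]
  have e1 : ∀ q : ι, ∑ p, M p q * w p * y q = (M.mulVec fun r => w r) q * y q := by
    intro q
    simp only [mulVec, dotProduct, Finset.sum_mul]
    exact Finset.sum_congr rfl fun p _ => by rw [hM.apply p q]
  have e2 : ∀ p : ι, ∑ q, M p q * w q * y p = (M.mulVec fun r => w r) p * y p := by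
    intro p
    simp only [mulVec, dotProduct, Finset.sum_mul]
  simp only [Finset.sum_congr rfl fun q _ => e1 q, Finset.sum_congr rfl fun p _ => e2 p]
  rw [← Finset.sum_add_distrib]
  apply Finset.sum_congr rfl; intro p _; ring

private lemma gradient_ratio' {ι : Type*} [Fintype ι] [DecidableEq ι]
    (M₀ M₁ : Matrix ι ι ℝ) (h₀ : M₀.IsSymm) (h₁ : M₁.IsSymm)
    (R : EuclideanSpace ℝ ι → ℝ)
    (hR : ∀ X : EuclideanSpace ℝ ι,
      R X = ((fun p => X p) ⬝ᵥ M₁.mulVec (fun p => X p)) /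
        -((fun p => X p) ⬝ᵥ M₀.mulVec (fun p => X p)))
    (w : EuclideanSpace ℝ ι)
    (hD : -((fun p => w p) ⬝ᵥ M₀.mulVec (fun p => w p)) ≠ 0) :
    ∀ p : ι, gradient R w p =
      2 / (-((fun p => w p) ⬝ᵥ M₀.mulVec (fun p => w p))) *
        ((M₁.mulVec (fun q => w q)) p +
          (((fun p => w p) ⬝ᵥ M₁.mulVec (fun p => w p)) /
            (-((fun p => w p) ⬝ᵥ M₀.mulVec (fun p => w p)))) * (M₀.mulVec (fun q => w q)) p) := by
  set N : ℝ := (fun p => w p) ⬝ᵥ M₁.mulVec (fun p => w p) with hN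
  set D : ℝ := -((fun p => w p) ⬝ᵥ M₀.mulVec (fun p => w p)) with hDdef
  set g₁ : EuclideanSpace ℝ ι := WithLp.toLp 2 (fun p => 2 * M₁.mulVec (fun q => w q) p) with hg₁
  set g₀ : EuclideanSpace ℝ ι := WithLp.toLp 2 (fun p => 2 * M₀.mulVec (fun q => w q) p) with hg₀
  have h1 := quad_hasFDerivAt' M₁ h₁ w
  have h0 := quad_hasFDerivAt' M₀ h₀ w
  have hden : HasFDerivAt
      (fun X : EuclideanSpace ℝ ι => -((fun p => X p) ⬝ᵥ M₀.mulVec (fun p => X p)))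
      (-(toDual ℝ (EuclideanSpace ℝ ι) g₀)) w := h0.neg
  have hinv : HasDerivAt (fun t : ℝ => t⁻¹) (-(D ^ 2)⁻¹) D := hasDerivAt_inv hD
  have hcomp : HasFDerivAt
      (fun X : EuclideanSpace ℝ ι => (-((fun p => X p) ⬝ᵥ M₀.mulVec (fun p => X p)))⁻¹)
      ((-(D ^ 2)⁻¹) • (-(toDual ℝ (EuclideanSpace ℝ ι) g₀))) w :=
    hinv.comp_hasFDerivAt w hden
  have hprod : HasFDerivAt
      (fun X : EuclideanSpace ℝ ι =>
        ((fun p => X p) ⬝ᵥ M₁.mulVec (fun p => X p)) *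
          (-((fun p => X p) ⬝ᵥ M₀.mulVec (fun p => X p)))⁻¹)
      (N • ((-(D ^ 2)⁻¹) • (-(toDual ℝ (EuclideanSpace ℝ ι) g₀)))
        + D⁻¹ • toDual ℝ (EuclideanSpace ℝ ι) g₁) w := h1.mul hcomp
  set g : EuclideanSpace ℝ ι := N • ((-(D ^ 2)⁻¹) • (-g₀)) + D⁻¹ • g₁ with hg
  have hRfun : R = fun X : EuclideanSpace ℝ ι =>
      ((fun p => X p) ⬝ᵥ M₁.mulVec (fun p => X p)) *
        (-((fun p => X p) ⬝ᵥ M₀.mulVec (fun p => X p)))⁻¹ := by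
    funext X; rw [hR X, div_eq_mul_inv]
  have hgrad : HasGradientAt R g w := by
    rw [hasGradientAt_iff_hasFDerivAt, hRfun]
    refine HasFDerivAt.congr_fderiv hprod ?_
    simp only [hg, map_add, _root_.map_smul, map_neg]
  have hgr := hgrad.gradient
  intro p
  rw [hgr]
  have hDne : D ≠ 0 := hD
  have hval : (N • ((-(D ^ 2)⁻¹) • (-g₀)) + D⁻¹ • g₁) p
      = N * ((-(D ^ 2)⁻¹) * (-(g₀ p))) + D⁻¹ * g₁ p := rfl
  show (N • ((-(D ^ 2)⁻¹) • (-g₀)) + D⁻¹ • g₁) p = _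
  rw [hval, hg₁, hg₀]
  show N * (-(D ^ 2)⁻¹ * -(2 * M₀.mulVec (fun q => w q) p)) + D⁻¹ * (2 * M₁.mulVec (fun q => w q) p)
    = 2 / D * (M₁.mulVec (fun q => w q) p + N / D * M₀.mulVec (fun q => w q) p)
  field_simp
  ring

end AuxGradient

/-- Key orthogonality step: after a half step of the alternating algorithm, i.e. when
`(a₁(u)I + A₂)v = −λ(b₁(u)I + B₂)v` for unit `u, v`, we have `λ = 𝔯(u⊗v)` and the
gradient of the Rayleigh quotient at `u⊗v` is orthogonal to `{u⊗y}`, hence lies in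
`{x⊗v}`. -/
theorem stmt_19 {n m : ℕ}
    (A₁ B₁ : Matrix (Fin n) (Fin n) ℝ) (A₂ B₂ : Matrix (Fin m) (Fin m) ℝ)
    (hA₁ : A₁.IsSymm) (hB₁ : B₁.IsSymm) (hA₂ : A₂.IsSymm) (hB₂ : B₂.IsSymm)
    (M₀ M₁ : Matrix (Fin n × Fin m) (Fin n × Fin m) ℝ)
    (hM₀ : M₀ = B₁ ⊗ₖ (1 : Matrix (Fin m) (Fin m) ℝ) + (1 : Matrix (Fin n) (Fin n) ℝ) ⊗ₖ B₂)
    (hM₁ : M₁ = A₁ ⊗ₖ (1 : Matrix (Fin m) (Fin m) ℝ) + (1 : Matrix (Fin n) (Fin n) ℝ) ⊗ₖ A₂)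
    (hM₀neg : (-M₀).PosDef)
    (R : EuclideanSpace ℝ (Fin n × Fin m) → ℝ)
    (hR : ∀ X : EuclideanSpace ℝ (Fin n × Fin m),
      R X = ((fun p => X p) ⬝ᵥ M₁.mulVec (fun p => X p)) /
        -((fun p => X p) ⬝ᵥ M₀.mulVec (fun p => X p)))
    (u : Fin n → ℝ) (v : Fin m → ℝ)
    (hu : u ⬝ᵥ u = 1) (hv : v ⬝ᵥ v = 1)
    (lam : ℝ)
    (heig : ((u ⬝ᵥ A₁.mulVec u) • (1 : Matrix (Fin m) (Fin m) ℝ) + A₂).mulVec v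
      = (-lam) • (((u ⬝ᵥ B₁.mulVec u) • (1 : Matrix (Fin m) (Fin m) ℝ) + B₂).mulVec v))
    (w : EuclideanSpace ℝ (Fin n × Fin m)) (hw : ∀ p, w p = u p.1 * v p.2) :
    lam = R w ∧
      (∀ y : Fin m → ℝ,
        (fun p : Fin n × Fin m => gradient R w p) ⬝ᵥ (fun p => u p.1 * y p.2) = 0) ∧
      ∃ x : Fin n → ℝ, ∀ p : Fin n × Fin m, gradient R w p = x p.1 * v p.2 := by
  have hwf : (fun p : Fin n × Fin m => w p) = fun p => u p.1 * v p.2 := funext hw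
  set a₁ : ℝ := u ⬝ᵥ A₁.mulVec u with ha₁
  set b₁ : ℝ := u ⬝ᵥ B₁.mulVec u with hb₁
  -- pointwise eigen relation
  have heig' : ∀ j, A₂.mulVec v j + lam * B₂.mulVec v j = -(a₁ + lam * b₁) * v j := by
    intro j
    have h := congrFun heig j
    simp only [add_mulVec, smul_mulVec, one_mulVec, Pi.add_apply, Pi.smul_apply,
      smul_eq_mul] at h
    linear_combination h
  -- mulVec computations
  have hM₁w : M₁.mulVec (fun p : Fin n × Fin m => u p.1 * v p.2)
      = fun p => (A₁.mulVec u) p.1 * v p.2 + u p.1 * (A₂.mulVec v) p.2 := by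
    funext p
    rw [hM₁, add_mulVec]
    simp only [kron_mulVec', one_mulVec, Pi.add_apply]
  have hM₀w : M₀.mulVec (fun p : Fin n × Fin m => u p.1 * v p.2)
      = fun p => (B₁.mulVec u) p.1 * v p.2 + u p.1 * (B₂.mulVec v) p.2 := by
    funext p
    rw [hM₀, add_mulVec]
    simp only [kron_mulVec', one_mulVec, Pi.add_apply]
  -- dot products
  have hdot₁ : (fun p : Fin n × Fin m => u p.1 * v p.2) ⬝ᵥ
      M₁.mulVec (fun p => u p.1 * v p.2) = a₁ + v ⬝ᵥ A₂.mulVec v := by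
    rw [hM₁w]
    have hsplit : (fun p : Fin n × Fin m => (A₁.mulVec u) p.1 * v p.2 + u p.1 * (A₂.mulVec v) p.2)
        = (fun p : Fin n × Fin m => (A₁.mulVec u) p.1 * v p.2)
          + (fun p : Fin n × Fin m => u p.1 * (A₂.mulVec v) p.2) := rfl
    rw [hsplit, dotProduct_add, dot_kron', dot_kron', hu, hv]
    ring
  have hdot₀ : (fun p : Fin n × Fin m => u p.1 * v p.2) ⬝ᵥ
      M₀.mulVec (fun p => u p.1 * v p.2) = b₁ + v ⬝ᵥ B₂.mulVec v := by
    rw [hM₀w]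
    have hsplit : (fun p : Fin n × Fin m => (B₁.mulVec u) p.1 * v p.2 + u p.1 * (B₂.mulVec v) p.2)
        = (fun p : Fin n × Fin m => (B₁.mulVec u) p.1 * v p.2)
          + (fun p : Fin n × Fin m => u p.1 * (B₂.mulVec v) p.2) := rfl
    rw [hsplit, dotProduct_add, dot_kron', dot_kron', hu, hv]
    ring
  -- key scalar identity from the eigen relation
  have hkey : v ⬝ᵥ A₂.mulVec v = -(a₁ + lam * b₁) - lam * (v ⬝ᵥ B₂.mulVec v) := by
    have hstep : v ⬝ᵥ A₂.mulVec v + lam * (v ⬝ᵥ B₂.mulVec v)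
        = -(a₁ + lam * b₁) * (v ⬝ᵥ v) := by
      simp only [dotProduct, Finset.mul_sum, ← Finset.sum_add_distrib]
      apply Finset.sum_congr rfl; intro j _
      linear_combination v j * heig' j
    rw [hv, mul_one] at hstep
    linarith
  -- positivity of the denominator
  have hwdot : (fun p : Fin n × Fin m => u p.1 * v p.2) ⬝ᵥ (fun p => u p.1 * v p.2) = 1 := by
    rw [dot_kron', hu, hv, mul_one]
  have hwne : (fun p : Fin n × Fin m => u p.1 * v p.2) ≠ 0 := by
    intro h
    rw [h] at hwdot
    simp at hwdot
  have hpos : 0 < -((fun p : Fin n × Fin m => u p.1 * v p.2) ⬝ᵥ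
      M₀.mulVec (fun p => u p.1 * v p.2)) := by
    have := hM₀neg.dotProduct_mulVec_pos hwne
    simpa [neg_mulVec, dotProduct_neg] using this
  have hSpos : 0 < -(b₁ + v ⬝ᵥ B₂.mulVec v) := by rw [← hdot₀]; exact hpos
  have hSne : b₁ + v ⬝ᵥ B₂.mulVec v ≠ 0 := by intro h; rw [h] at hSpos; simp at hSpos
  -- value of R at w
  have hRw : R w = lam := by
    rw [hR w, hwf, hdot₁, hdot₀, hkey, div_eq_iff (neg_ne_zero.mpr hSne)]
    ring
  -- symmetry of M₀ and M₁
  have h₀sym : M₀.IsSymm := by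
    rw [hM₀]
    apply Matrix.IsSymm.add
    · show _ᵀ = _
      rw [← kroneckerMap_transpose, hB₁.eq, Matrix.transpose_one]
    · show _ᵀ = _
      rw [← kroneckerMap_transpose, hB₂.eq, Matrix.transpose_one]
  have h₁sym : M₁.IsSymm := by
    rw [hM₁]
    apply Matrix.IsSymm.add
    · show _ᵀ = _
      rw [← kroneckerMap_transpose, hA₁.eq, Matrix.transpose_one]
    · show _ᵀ = _
      rw [← kroneckerMap_transpose, hA₂.eq, Matrix.transpose_one]
  -- gradient formula
  have hDne : -((fun p : Fin n × Fin m => w p) ⬝ᵥ M₀.mulVec (fun p => w p)) ≠ 0 := by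
    rw [hwf, hdot₀]
    exact ne_of_gt hSpos
  have hgradp := gradient_ratio' M₀ M₁ h₀sym h₁sym R hR w hDne
  rw [hwf] at hgradp
  rw [hdot₀, hdot₁] at hgradp
  set D : ℝ := -(b₁ + v ⬝ᵥ B₂.mulVec v) with hD
  have hlamq : (a₁ + v ⬝ᵥ A₂.mulVec v) / D = lam := by
    rw [hkey, div_eq_iff (ne_of_gt hSpos), hD]
    ring
  -- explicit gradient
  set x : Fin n → ℝ := fun i =>
    2 / D * ((A₁.mulVec u) i + lam * (B₁.mulVec u) i - (a₁ + lam * b₁) * u i) with hx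
  have hgrad : ∀ p : Fin n × Fin m, gradient R w p = x p.1 * v p.2 := by
    intro p
    rw [hgradp p, hlamq, hM₁w, hM₀w, hx]
    linear_combination (2 / D * u p.1) * heig' p.2
  refine ⟨hRw.symm, ?_, ⟨x, hgrad⟩⟩
  intro y
  have hfun : (fun p : Fin n × Fin m => gradient R w p) = fun p => x p.1 * v p.2 :=
    funext hgrad
  rw [hfun, dot_kron']
  have hxu : x ⬝ᵥ u = 0 := by
    have hexp : x ⬝ᵥ u = 2 / D * ((A₁.mulVec u) ⬝ᵥ u) + 2 / D * lam * ((B₁.mulVec u) ⬝ᵥ u)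
        - 2 / D * (a₁ + lam * b₁) * (u ⬝ᵥ u) := by
      simp only [dotProduct, hx, Finset.mul_sum]
      rw [← Finset.sum_add_distrib, ← Finset.sum_sub_distrib]
      apply Finset.sum_congr rfl; intro i _
      ring
    rw [hexp, dotProduct_comm (A₁.mulVec u) u, dotProduct_comm (B₁.mulVec u) u, hu,
      ← ha₁, ← hb₁]
    ring
  rw [hxu, zero_mul]
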